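/- Let Y ⊆ ℝ^D be a nonempty finite set, let r > 0, and define the open set U := ⋃_{y ∈ Y} B(y, r). Let η : ℝ^D → ℝ be continuously differentiable, and suppose there exists δ > 0 such that for every x in the topological frontier of U and every y ∈ Y with ‖x − y‖ = r, one has ⟪∇η(x), x − y⟫ ≥ δ · r. Let T > 0 and let x : [0, T] → ℝ^D be a differentiable curve solving the negative gradient flow x′(t) = −∇η(x(t)) for all t ∈ [0, T], with x(0) ∈ U. Then x(t) ∈ U for all t ∈ [0, T] (the trajectory never reaches the boundary of U). -/

import Mathlib

open Metric Set Filter Topology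

/-- Non-escape: under an outward boundary-barrier condition, the negative gradient
flow started in the union of balls `U` never reaches the boundary of `U`. -/
theorem gradient_flow_nonescape {D : ℕ}
    (Y : Set (EuclideanSpace ℝ (Fin D))) (hY : Y.Nonempty) (hYfin : Y.Finite)
    (r : ℝ) (hr : 0 < r)
    (η : EuclideanSpace ℝ (Fin D) → ℝ) (hη : ContDiff ℝ 1 η)
    (δ : ℝ) (hδ : 0 < δ)
    (hbarrier : ∀ x ∈ frontier (⋃ y ∈ Y, ball y r), ∀ y ∈ Y, ‖x - y‖ = r →
      inner ℝ (gradient η x) (x - y) ≥ δ * r)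
    (T : ℝ) (hT : 0 < T)
    (X : ℝ → EuclideanSpace ℝ (Fin D))
    (hflow : ∀ t ∈ Icc (0 : ℝ) T, HasDerivAt X (-(gradient η (X t))) t)
    (hX0 : X 0 ∈ ⋃ y ∈ Y, ball y r) :
    ∀ t ∈ Icc (0 : ℝ) T, X t ∈ ⋃ y ∈ Y, ball y r := by
  set U := ⋃ y ∈ Y, ball y r with hU
  by_contra hcon
  push_neg at hcon
  obtain ⟨t₁, ht₁, ht₁U⟩ := hcon
  set B := {t | t ∈ Icc (0:ℝ) T ∧ X t ∉ U} with hBdef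
  have hBne : B.Nonempty := ⟨t₁, ht₁, ht₁U⟩
  have hBbdd : BddBelow B := ⟨0, fun t ht => ht.1.1⟩
  set t₀ := sInf B with ht₀def
  have ht₀cl : t₀ ∈ closure B := csInf_mem_closure hBne hBbdd
  have hBIcc : B ⊆ Icc (0:ℝ) T := fun t ht => ht.1
  have ht₀Icc : t₀ ∈ Icc (0:ℝ) T :=
    isClosed_Icc.closure_subset ((closure_mono hBIcc) ht₀cl)
  have hXcont : ∀ t ∈ Icc (0:ℝ) T, ContinuousAt X t := fun t ht =>
    (hflow t ht).differentiableAt.continuousAt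
  have hUopen : IsOpen U := isOpen_biUnion fun y _ => isOpen_ball
  -- X t₀ ∉ U
  have ht₀notU : X t₀ ∉ U := by
    have h1 : X t₀ ∈ closure (X '' B) :=
      ((hXcont t₀ ht₀Icc).continuousWithinAt).mem_closure_image ht₀cl
    have hsub : X '' B ⊆ Uᶜ := by rintro _ ⟨t, ht, rfl⟩; exact ht.2
    exact (hUopen.isClosed_compl.closure_subset_iff.2 hsub) h1
  have ht₀pos : 0 < t₀ := by
    rcases lt_or_eq_of_le ht₀Icc.1 with h | h
    · exact h
    · exact absurd (h ▸ hX0) ht₀notU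
  have hbefore : ∀ t, 0 ≤ t → t < t₀ → X t ∈ U := by
    intro t h0 hlt
    by_contra hnot
    exact absurd (csInf_le hBbdd ⟨⟨h0, hlt.le.trans ht₀Icc.2⟩, hnot⟩) (not_le.2 hlt)
  have hev : ∀ᶠ t in 𝓝[<] t₀, X t ∈ U := by
    filter_upwards [Ioo_mem_nhdsLT ht₀pos] with t ht
    exact hbefore t ht.1.le ht.2
  -- pigeonhole: one ball contains X t frequently as t → t₀⁻
  obtain ⟨y, hyY, hfreq⟩ : ∃ y ∈ Y, ∃ᶠ t in 𝓝[<] t₀, X t ∈ ball y r := by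
    by_contra h
    push_neg at h
    obtain ⟨t, h1, h2⟩ := ((hYfin.eventually_all.2 h).and hev).exists
    rw [hU, mem_iUnion₂] at h2
    obtain ⟨y, hy, hmem⟩ := h2
    exact h1 y hy hmem
  have htendX : Tendsto X (𝓝[<] t₀) (𝓝 (X t₀)) :=
    ((hXcont t₀ ht₀Icc).tendsto).mono_left nhdsWithin_le_nhds
  -- ‖X t₀ - y‖ = r
  have hnorm_ge : r ≤ ‖X t₀ - y‖ := by
    by_contra h
    push_neg at h
    exact ht₀notU (mem_biUnion hyY (by rwa [mem_ball, dist_eq_norm]))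
  have hnorm_le : ‖X t₀ - y‖ ≤ r := by
    by_contra h
    push_neg at h
    have htendn : Tendsto (fun t => ‖X t - y‖) (𝓝[<] t₀) (𝓝 ‖X t₀ - y‖) :=
      (continuous_norm.tendsto _).comp ((htendX.sub_const y))
    have hev2 : ∀ᶠ t in 𝓝[<] t₀, r < ‖X t - y‖ :=
      htendn.eventually (eventually_gt_nhds h)
    obtain ⟨t, h1, h2⟩ := (hfreq.and_eventually hev2).exists
    rw [mem_ball, dist_eq_norm] at h1
    linarith
  have hnorm : ‖X t₀ - y‖ = r := le_antisymm hnorm_le hnorm_ge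
  have hfront : X t₀ ∈ frontier U := by
    constructor
    · rw [mem_closure_iff_frequently]
      exact htendX.frequently (hfreq.mono fun t ht => mem_biUnion hyY ht)
    · rwa [hUopen.interior_eq]
  have hbar : inner ℝ (gradient η (X t₀)) (X t₀ - y) ≥ δ * r := hbarrier _ hfront y hyY hnorm
  -- the squared distance function
  have h1 : HasDerivAt (fun t => X t - y) (-(gradient η (X t₀))) t₀ :=
    (hflow t₀ ht₀Icc).sub_const y
  have hf : HasDerivAt (fun t => ‖X t - y‖ ^ 2)
      (-(2 * inner ℝ (gradient η (X t₀)) (X t₀ - y))) t₀ := by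
    have h2 := h1.inner ℝ h1
    simp only [real_inner_self_eq_norm_sq] at h2
    refine h2.congr_deriv ?_
    rw [inner_neg_right, inner_neg_left, real_inner_comm]
    ring
  have hneg : (-(2 * inner ℝ (gradient η (X t₀)) (X t₀ - y)) : ℝ) < 0 := by
    nlinarith [mul_pos hδ hr]
  have hslope := hasDerivAt_iff_tendsto_slope.1 hf
  have hev3 : ∀ᶠ t in 𝓝[<] t₀, slope (fun t => ‖X t - y‖ ^ 2) t₀ t < 0 := by
    have := hslope.eventually (eventually_lt_nhds hneg)
    exact this.filter_mono (nhdsWithin_mono _ (fun t (ht : t ∈ Iio t₀) => ne_of_lt ht))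
  have hev4 : ∀ᶠ t in 𝓝[<] t₀, t < t₀ := eventually_mem_nhdsWithin
  obtain ⟨t, hball, hs, hlt⟩ := (hfreq.and_eventually (hev3.and hev4)).exists
  rw [mem_ball, dist_eq_norm] at hball
  rw [slope_def_field] at hs
  have hft₀ : ‖X t₀ - y‖ ^ 2 = r ^ 2 := by rw [hnorm]
  have hd : (‖X t - y‖ ^ 2 - ‖X t₀ - y‖ ^ 2) / (t - t₀) < 0 := hs
  have htneg : t - t₀ < 0 := by linarith
  have : ‖X t - y‖ ^ 2 - ‖X t₀ - y‖ ^ 2 > 0 := by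
    by_contra hc
    push_neg at hc
    have := div_nonneg_of_nonpos hc htneg.le
    linarith
  nlinarith [norm_nonneg (X t - y)]
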